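/- Suppose h_max has a unique minimizer b_g over {0,1}^n, with ground energy λ₁ = h_max(b_g) > 0 and first excited energy λ₂ = min over b ≠ b_g of h_max(b), and spectral gap ratio r = (λ₂ − λ₁)/λ₁. If the positive integer p satisfies (p : ℝ) > log M / log(r + 1), then b_g is also the unique minimizer of h_p; that is, h_p(b_g) < h_p(b) for every b ≠ b_g. -/

import Mathlib

/-- **Theorem 1, first part (unique minimizer recovery).**
If `h_max` has a unique minimizer `b_g`, with ground energy `λ₁ = h_max(b_g) > 0`,
first excited energy `λ₂ = min_{b ≠ b_g} h_max(b)`, and spectral gap ratio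
`r = (λ₂ − λ₁)/λ₁`, then any positive integer `p` with
`(p : ℝ) > log M / log (r + 1)` makes `b_g` the unique minimizer of `h_p`. -/
theorem moqa_ground_state_recovery
    (n M p : ℕ) (hM : 1 ≤ M) (hp : 1 ≤ p) (hn : 1 ≤ n)
    (h : Fin M → (Fin n → Bool) → ℝ)
    (hnn : ∀ m b, 0 ≤ h m b)
    (hmax hP : (Fin n → Bool) → ℝ)
    (hmax_def : ∀ b, IsGreatest (Set.range fun m => h m b) (hmax b))
    (hP_def : ∀ b, hP b = ∑ m : Fin M, (h m b) ^ p)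
    (bg : Fin n → Bool)
    (hunique : ∀ b ≠ bg, hmax bg < hmax b)
    (lam1 lam2 r : ℝ)
    (hlam1 : lam1 = hmax bg)
    (hlam1pos : 0 < lam1)
    (hlam2 : IsLeast (hmax '' {b | b ≠ bg}) lam2)
    (hr : r = (lam2 - lam1) / lam1)
    (hpbig : (p : ℝ) > Real.log M / Real.log (r + 1)) :
    ∀ b ≠ bg, hP bg < hP b := by
  -- lam2 > lam1
  obtain ⟨b0, hb0ne, hb0⟩ := hlam2.1
  have hlt : lam1 < lam2 := by
    rw [hlam1, ← hb0]; exact hunique b0 hb0ne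
  have hlam2pos : 0 < lam2 := hlam1pos.trans hlt
  have hr1 : r + 1 = lam2 / lam1 := by
    rw [hr]; field_simp; ring
  have hr1gt : (1:ℝ) < r + 1 := by
    rw [hr1]; exact (one_lt_div hlam1pos).2 hlt
  -- (r+1)^p > M
  have hMpos : (0:ℝ) < (M:ℝ) := by exact_mod_cast hM
  have hkey : (M:ℝ) < (r + 1) ^ p := by
    have hlogpos : 0 < Real.log (r + 1) := Real.log_pos hr1gt
    have : Real.log (M:ℝ) < (p:ℝ) * Real.log (r + 1) := by
      have := (div_lt_iff₀ hlogpos).1 hpbig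
      linarith
    have hlog : Real.log (M:ℝ) < Real.log ((r + 1) ^ p) := by
      rwa [Real.log_pow]
    exact (Real.log_lt_log_iff hMpos (pow_pos (by linarith) p)).1 hlog
  -- M * lam1^p < lam2^p
  have hmid : (M:ℝ) * lam1 ^ p < lam2 ^ p := by
    have := mul_lt_mul_of_pos_right hkey (pow_pos hlam1pos p)
    calc (M:ℝ) * lam1 ^ p < (r + 1) ^ p * lam1 ^ p := this
      _ = lam2 ^ p := by
          rw [hr1, div_pow, div_mul_cancel₀]
          exact pow_ne_zero p hlam1pos.ne'
  intro b hbne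
  -- hP bg ≤ M * lam1^p
  have hub : hP bg ≤ (M:ℝ) * lam1 ^ p := by
    rw [hP_def]
    calc ∑ m : Fin M, (h m bg) ^ p
        ≤ ∑ _m : Fin M, lam1 ^ p := by
          apply Finset.sum_le_sum
          intro m _
          exact pow_le_pow_left₀ (hnn m bg)
            (by rw [hlam1]; exact (hmax_def bg).2 ⟨m, rfl⟩) p
      _ = (M:ℝ) * lam1 ^ p := by
          simp [Finset.sum_const, nsmul_eq_mul]
  -- lam2^p ≤ hP b
  have hlb : lam2 ^ p ≤ hP b := by
    obtain ⟨m0, hm0⟩ := (hmax_def b).1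
    have h1 : lam2 ≤ h m0 b := by
      have := hlam2.2 ⟨b, hbne, rfl⟩
      simpa [← hm0] using this
    have h2 : lam2 ^ p ≤ (h m0 b) ^ p := pow_le_pow_left₀ hlam2pos.le h1 p
    rw [hP_def]
    refine h2.trans ?_
    exact Finset.single_le_sum (fun m _ => pow_nonneg (hnn m b) p) (Finset.mem_univ m0)
  linarith
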